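/- If the small-scale channel gain g̃ follows the F composite fading distribution with density f(g̃) = m^m·(m_s−1)^{m_s}·ḡ^{m_s}·g̃^{m−1} / (B(m,m_s)·(m·g̃ + (m_s−1)·ḡ)^{m+m_s}), then for every real n with −m < n < m_s, the n-th moment is E[g̃^n] = (m_s−1)^n·ḡ^n·Γ(m+n)·Γ(m_s−n) / (m^n·Γ(m)·Γ(m_s)). -/

import Mathlib

open Real MeasureTheory

lemma real_beta_Ioo {a b : ℝ} (ha : 0 < a) (hb : 0 < b) :
    ∫ x in Set.Ioo (0:ℝ) 1, x ^ (a-1) * (1-x) ^ (b-1) =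
      Real.Gamma a * Real.Gamma b / Real.Gamma (a+b) := by
  have key : (↑(∫ x in (0:ℝ)..1, x ^ (a-1) * (1-x) ^ (b-1)) : ℂ)
      = Complex.betaIntegral a b := by
    rw [Complex.betaIntegral, ← intervalIntegral.integral_ofReal]
    refine intervalIntegral.integral_congr fun x hx => ?_
    rw [Set.uIcc_of_le zero_le_one] at hx
    rw [Complex.ofReal_mul, Complex.ofReal_cpow hx.1,
      Complex.ofReal_cpow (by linarith [hx.2] : (0:ℝ) ≤ 1 - x)]
    push_cast
    ring
  have h := Complex.Gamma_mul_Gamma_eq_betaIntegral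
    (s := (a:ℂ)) (t := (b:ℂ)) (by simpa using ha) (by simpa using hb)
  rw [← key] at h
  have h2 : Real.Gamma a * Real.Gamma b
      = Real.Gamma (a+b) * ∫ x in (0:ℝ)..1, x ^ (a-1) * (1-x) ^ (b-1) := by
    rw [Complex.Gamma_ofReal, Complex.Gamma_ofReal, ← Complex.ofReal_add, Complex.Gamma_ofReal,
      ← Complex.ofReal_mul, ← Complex.ofReal_mul] at h
    exact_mod_cast h
  have hΓ : Real.Gamma (a+b) ≠ 0 := (Real.Gamma_pos_of_pos (by linarith)).ne'
  rw [intervalIntegral.integral_of_le zero_le_one, integral_Ioc_eq_integral_Ioo] at h2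
  rw [h2, mul_div_cancel_left₀ _ hΓ]

theorem F_composite_fading_moment (m ms gbar : ℝ) (hm : 0 < m) (hms : 1 < ms)
    (hg : 0 < gbar) (n : ℝ) (hn1 : -m < n) (hn2 : n < ms)
    (f : ℝ → ℝ)
    (hf : ∀ g : ℝ, f g =
      m ^ m * (ms - 1) ^ ms * gbar ^ ms * g ^ (m - 1) /
        ((Real.Gamma m * Real.Gamma ms / Real.Gamma (m + ms)) *
          (m * g + (ms - 1) * gbar) ^ (m + ms))) :
    ∫ g in Set.Ioi (0 : ℝ), g ^ n * f g =
      (ms - 1) ^ n * gbar ^ n * Real.Gamma (m + n) * Real.Gamma (ms - n) /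
        (m ^ n * Real.Gamma m * Real.Gamma ms) := by
  have hc : (0:ℝ) < (ms - 1) * gbar := by nlinarith
  set c : ℝ := (ms - 1) * gbar with hcdef
  set k : ℝ := c / m with hkdef
  have hk : 0 < k := div_pos hc hm
  set φ : ℝ → ℝ := fun x => k * x / (1 - x) with hφdef
  -- image
  have himg : Set.Ioi (0:ℝ) = φ '' Set.Ioo 0 1 := by
    ext y
    simp only [Set.mem_image, Set.mem_Ioi, Set.mem_Ioo, hφdef]
    constructor
    · intro hy
      refine ⟨y / (y + k), ⟨by positivity, by rw [div_lt_one (by positivity)]; linarith⟩, ?_⟩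
      have h1 : 1 - y / (y + k) = k / (y + k) := by field_simp; ring
      rw [h1]
      field_simp
    · rintro ⟨x, ⟨hx0, hx1⟩, rfl⟩
      exact div_pos (by positivity) (by linarith)
  -- derivative
  have hderiv : ∀ x ∈ Set.Ioo (0:ℝ) 1,
      HasDerivWithinAt φ (k / (1 - x) ^ 2) (Set.Ioo 0 1) x := by
    intro x hx
    have hx1 : (1:ℝ) - x ≠ 0 := by simp only [Set.mem_Ioo] at hx; intro h; linarith [hx.2]
    have h1 : HasDerivAt (fun x : ℝ => k * x) k x := by
      simpa using (hasDerivAt_id x).const_mul k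
    have h2 : HasDerivAt (fun x : ℝ => 1 - x) (-1) x := by
      simpa using (hasDerivAt_id x).const_sub 1
    have h3 := h1.div h2 hx1
    have : HasDerivAt φ (k / (1 - x) ^ 2) x := by
      rw [show (k * (1 - x) - k * x * -1) / (1 - x) ^ 2 = k / (1 - x) ^ 2 by ring] at h3
      exact h3
    exact this.hasDerivWithinAt
  -- injectivity
  have hinj : Set.InjOn φ (Set.Ioo 0 1) := by
    intro x hx y hy hxy
    simp only [Set.mem_Ioo] at hx hy
    have hx1 : (1:ℝ) - x ≠ 0 := by intro h; linarith [hx.2]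
    have hy1 : (1:ℝ) - y ≠ 0 := by intro h; linarith [hy.2]
    simp only [hφdef] at hxy
    field_simp at hxy
    nlinarith [hk]
  rw [himg, integral_image_eq_integral_abs_deriv_smul measurableSet_Ioo hderiv hinj]
  set C : ℝ := k ^ (m+n) * m ^ m * (ms-1) ^ ms * gbar ^ ms /
    ((Real.Gamma m * Real.Gamma ms / Real.Gamma (m + ms)) * c ^ (m+ms)) with hCdef
  have hptwise : ∀ x ∈ Set.Ioo (0:ℝ) 1,
      |k / (1 - x) ^ 2| • (φ x ^ n * f (φ x))
        = C * (x ^ (m+n-1) * (1-x) ^ (ms-n-1)) := by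
    intro x hx
    obtain ⟨hx0, hx1⟩ := hx
    have hu : (0:ℝ) < 1 - x := by linarith
    have hφp : 0 < φ x := div_pos (by positivity) hu
    have hms1 : (0:ℝ) < ms - 1 := by linarith
    have hΓm := Real.Gamma_pos_of_pos hm
    have hΓms := Real.Gamma_pos_of_pos (by linarith : (0:ℝ) < ms)
    have hΓmms := Real.Gamma_pos_of_pos (by linarith : (0:ℝ) < m + ms)
    rw [hf]
    have hden : m * φ x + (ms - 1) * gbar = c / (1 - x) := by
      simp only [hφdef, hkdef]
      field_simp
      ring
    rw [hden, smul_eq_mul, abs_of_pos (by positivity)]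
    have hsplit : ∀ p : ℝ, φ x ^ p = k ^ p * x ^ p / (1-x) ^ p := by
      intro p
      rw [hφdef]
      rw [Real.div_rpow (by positivity) hu.le, Real.mul_rpow hk.le hx0.le]
    rw [hsplit n, hsplit (m-1), Real.div_rpow hc.le hu.le, hCdef]
    simp only [Real.rpow_add hk, Real.rpow_sub hk, Real.rpow_add hx0, Real.rpow_sub hx0,
      Real.rpow_add hu, Real.rpow_sub hu, Real.rpow_one]
    have l1 := (Real.rpow_pos_of_pos hu n).ne'
    have l2 := (Real.rpow_pos_of_pos hu m).ne'
    have l3 := (Real.rpow_pos_of_pos hu ms).ne'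
    have l4 := (Real.rpow_pos_of_pos hc (m+ms)).ne'
    have l5 := (Real.rpow_pos_of_pos hk m).ne'
    have l6 := (Real.rpow_pos_of_pos hk n).ne'
    have l7 := (Real.rpow_pos_of_pos hx0 n).ne'
    have l8 := (Real.rpow_pos_of_pos hx0 m).ne'
    field_simp
  rw [setIntegral_congr_fun measurableSet_Ioo hptwise, integral_const_mul,
    real_beta_Ioo (by linarith) (by linarith)]
  have hrw : m + n + (ms - n) = m + ms := by ring
  have hms1 : (0:ℝ) < ms - 1 := by linarith
  have hΓm := Real.Gamma_pos_of_pos hm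
  have hΓms := Real.Gamma_pos_of_pos (by linarith : (0:ℝ) < ms)
  have hΓmms := Real.Gamma_pos_of_pos (by linarith : (0:ℝ) < m + ms)
  have hmerge : ∀ p : ℝ, (ms-1) ^ p * gbar ^ p = c ^ p := by
    intro p
    rw [hcdef, Real.mul_rpow hms1.le hg.le]
  rw [hrw, hCdef, hkdef, Real.div_rpow hc.le hm.le,
    show c ^ (m+n) / m ^ (m+n) * m ^ m * (ms-1) ^ ms * gbar ^ ms
      = c ^ (m+n) / m ^ (m+n) * m ^ m * ((ms-1) ^ ms * gbar ^ ms) from by ring, hmerge ms,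
    show (ms-1) ^ n * gbar ^ n * Real.Gamma (m+n) * Real.Gamma (ms-n)
      = (ms-1) ^ n * gbar ^ n * (Real.Gamma (m+n) * Real.Gamma (ms-n)) from by ring]
  rw [hmerge n]
  simp only [Real.rpow_add hc, Real.rpow_add hm]
  have l1 := (Real.rpow_pos_of_pos hc m).ne'
  have l2 := (Real.rpow_pos_of_pos hc n).ne'
  have l3 := (Real.rpow_pos_of_pos hc ms).ne'
  have l4 := (Real.rpow_pos_of_pos hm m).ne'
  have l5 := (Real.rpow_pos_of_pos hm n).ne'
  field_simp
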